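/- Let (X, 𝓑) be a simple (v, k, λ)-BIBD such that for all distinct blocks B, C ∈ 𝓑 the symmetric difference B Δ C is again a block of 𝓑, and let n be the rank over 𝔽₂ of the incidence matrix of (X, 𝓑). Then the number of blocks satisfies |𝓑| = 2^n − 1. -/

import Mathlib

open scoped symmDiff

/-- `(X, 𝓑)` is a simple `(v, k, λ)`-BIBD: `X` has `v` points, every block has
exactly `k` points, every pair of distinct points lies in exactly `λ` blocks,
and `v > k ≥ 2`. -/
def IsBIBD (X : Type*) [Fintype X] [DecidableEq X]
    (𝓑 : Finset (Finset X)) (v k l : ℕ) : Prop :=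
  Fintype.card X = v ∧
  (∀ B ∈ 𝓑, B.card = k) ∧
  (∀ x y : X, x ≠ y → (𝓑.filter fun B => x ∈ B ∧ y ∈ B).card = l) ∧
  k < v ∧ 2 ≤ k

/-- The incidence matrix of the design `(X, 𝓑)` over `𝔽₂ = ZMod 2`:
rows are indexed by points, columns by blocks, with entry `1` iff
the point belongs to the block. -/
def incidenceMatrix (X : Type*) [DecidableEq X]
    (𝓑 : Finset (Finset X)) : Matrix X {B // B ∈ 𝓑} (ZMod 2) :=
  fun x B => if x ∈ B.1 then 1 else 0

private def indic {X : Type*} [DecidableEq X] (B : Finset X) : X → ZMod 2 :=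
  fun x => if x ∈ B then 1 else 0

private lemma indic_add {X : Type*} [DecidableEq X] (B C : Finset X) :
    indic B + indic C = indic (B ∆ C) := by
  funext x
  simp only [indic, Pi.add_apply, Finset.mem_symmDiff]
  by_cases hB : x ∈ B <;> by_cases hC : x ∈ C <;> simp [hB, hC] <;> decide

private lemma indic_inj {X : Type*} [DecidableEq X] : Function.Injective (indic (X := X)) := by
  intro B C h
  ext x
  have := congrFun h x
  simp only [indic] at this
  by_cases hB : x ∈ B <;> by_cases hC : x ∈ C <;> simp_all

private lemma indic_empty {X : Type*} [DecidableEq X] : indic (∅ : Finset X) = 0 := by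
  funext x; simp [indic]

theorem stmt_5 {X : Type*} [Fintype X] [DecidableEq X]
    (𝓑 : Finset (Finset X)) (v k l n : ℕ)
    (hBIBD : IsBIBD X 𝓑 v k l)
    (hΔ : ∀ B ∈ 𝓑, ∀ C ∈ 𝓑, B ≠ C → B ∆ C ∈ 𝓑)
    (hn : (incidenceMatrix X 𝓑).rank = n) :
    𝓑.card = 2 ^ n - 1 := by
  classical
  obtain ⟨-, hk, -, -, hk2⟩ := hBIBD
  have hne : (∅ : Finset X) ∉ 𝓑 := fun h => by
    have := hk ∅ h; simp at this; omega
  set S : Set (X → ZMod 2) := indic '' (↑𝓑 : Set (Finset X)) with hS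
  have hzero : (0 : X → ZMod 2) ∉ S := by
    rintro ⟨B, hB, hB0⟩
    have : B = ∅ := indic_inj (by rw [hB0, indic_empty])
    exact hne (this ▸ hB)
  -- S ∪ {0} is a submodule
  let W : Submodule (ZMod 2) (X → ZMod 2) :=
  { carrier := S ∪ {0}
    add_mem' := by
      rintro a b (⟨B, hB, rfl⟩ | ha) (⟨C, hC, rfl⟩ | hb)
      · by_cases hBC : B = C
        · subst hBC
          right
          rw [indic_add, symmDiff_self]
          exact indic_empty
        · left
          rw [indic_add]
          exact ⟨B ∆ C, hΔ B hB C hC hBC, rfl⟩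
      · simp only [Set.mem_singleton_iff] at hb; subst hb
        left; exact ⟨B, hB, by simp⟩
      · simp only [Set.mem_singleton_iff] at ha; subst ha
        left; rw [zero_add]; exact ⟨C, hC, rfl⟩
      · simp only [Set.mem_singleton_iff] at ha hb; subst ha; subst hb
        right; simp
    zero_mem' := Or.inr rfl
    smul_mem' := by
      intro c x hx
      fin_cases c
      · right; exact zero_smul (ZMod 2) x
      · convert hx using 1; exact one_smul (ZMod 2) x }
  have hWcar : (W : Set (X → ZMod 2)) = S ∪ {0} := rfl
  have hrange : Set.range (incidenceMatrix X 𝓑).transpose = S := by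
    ext y
    constructor
    · rintro ⟨B, rfl⟩
      exact ⟨B.1, B.2, by funext x; simp [Matrix.transpose_apply, incidenceMatrix, indic]⟩
    · rintro ⟨B, hB, rfl⟩
      exact ⟨⟨B, hB⟩, by funext x; simp [Matrix.transpose_apply, incidenceMatrix, indic]⟩
  have hspan : Submodule.span (ZMod 2) S = W := by
    apply le_antisymm
    · rw [Submodule.span_le, hWcar]
      exact Set.subset_union_left
    · intro x hx
      rcases hx with hx | hx
      · exact Submodule.subset_span hx
      · simp only [Set.mem_singleton_iff] at hx; subst hx
        exact Submodule.zero_mem _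
  have hfin : Module.finrank (ZMod 2) W = n := by
    rw [Matrix.rank_eq_finrank_span_cols] at hn
    rw [← hspan, ← hrange]
    exact hn
  have : Fintype W := Fintype.ofFinite W
  have hcardW : Fintype.card W = 2 ^ n := by
    have := Module.card_eq_pow_finrank (K := ZMod 2) (V := W)
    rwa [ZMod.card, hfin] at this
  have hScard : S.ncard = 𝓑.card := by
    rw [hS, Set.ncard_image_of_injective _ indic_inj, Set.ncard_coe_finset]
  have hcardW' : Fintype.card W = 𝓑.card + 1 := by
    rw [← Nat.card_eq_fintype_card]
    have : Nat.card W = (W : Set (X → ZMod 2)).ncard := (Nat.card_coe_set_eq _).symm ▸ rfl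
    rw [this, hWcar, Set.ncard_union_eq (by simpa [Set.disjoint_singleton_right] using hzero)
      (Set.toFinite _) (Set.toFinite _), hScard, Set.ncard_singleton]
  omega
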